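/- Let m be a positive integer, 0 < λ < 1, f : ℝ^m → ℝ^m a λ-contraction, x⁰ ∈ ℝ^m, and define the Picard iteration xⁿ⁺¹ = f(xⁿ) and the real iteration t⁰ = 0, tⁿ⁺¹ = λ tⁿ + ‖x¹ − x⁰‖. Then the sequence (xⁿ, tⁿ) in ℝ^m × ℝ is increasing with respect to the order induced by the Lorentz cone L, bounded above (in that order) by every element of the set Ω, hence convergent; its limit (x*, t*) is a lower L-bound of Ω, and x* is the unique fixed point of f. -/

import Mathlib

/-- The Banach fixed point principle viewed as a monotone convergence with respect to the
Lorentz cone: the sequence `(xⁿ, tⁿ)` is `L`-increasing, `L`-bounded above by every element of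
`Ω`, hence convergent; its limit `(x*, t*)` is a lower `L`-bound of `Ω` and `x*` is the unique
fixed point of `f`. -/
theorem stmt_0 (m : ℕ) (hm : 0 < m) (lam : ℝ) (hlam0 : 0 < lam) (hlam1 : lam < 1)
    (f : EuclideanSpace ℝ (Fin m) → EuclideanSpace ℝ (Fin m))
    (hf : ∀ x y, ‖f x - f y‖ ≤ lam * ‖x - y‖)
    (x : ℕ → EuclideanSpace ℝ (Fin m)) (t : ℕ → ℝ)
    (hx : ∀ n, x (n + 1) = f (x n)) (ht0 : t 0 = 0)
    (ht : ∀ n, t (n + 1) = lam * t n + ‖x 1 - x 0‖)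
    (Ω : Set (EuclideanSpace ℝ (Fin m) × ℝ))
    (hΩ : Ω = {p : EuclideanSpace ℝ (Fin m) × ℝ |
      ‖p.1 - x 0‖ ≤ p.2 ∧ (‖x 1 - x 0‖ + ‖f p.1 - p.1‖) / (1 - lam) ≤ p.2}) :
    (∀ n, ‖x (n + 1) - x n‖ ≤ t (n + 1) - t n) ∧
    (∀ p ∈ Ω, ∀ n, ‖p.1 - x n‖ ≤ p.2 - t n) ∧
    ∃ xs : EuclideanSpace ℝ (Fin m), ∃ ts : ℝ,
      Filter.Tendsto (fun n => (x n, t n)) Filter.atTop (nhds (xs, ts)) ∧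
      (∀ p ∈ Ω, ‖p.1 - xs‖ ≤ p.2 - ts) ∧
      f xs = xs ∧ ∀ y, f y = y → y = xs := by
  set c := ‖x 1 - x 0‖ with hcdef
  have hc : (0:ℝ) ≤ c := norm_nonneg _
  have h1lam : (0:ℝ) < 1 - lam := by linarith
  -- explicit formula for t
  have htn : ∀ n, t n = c / (1 - lam) - lam ^ n * (c / (1 - lam)) := by
    intro n
    induction n with
    | zero => simp [ht0]
    | succ n ih =>
      rw [ht n, ih]
      field_simp
      ring
  have hdiff : ∀ n, t (n + 1) - t n = lam ^ n * c := by
    intro n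
    rw [htn (n + 1), htn n]
    field_simp
    ring
  have hxn : ∀ n, ‖x (n + 1) - x n‖ ≤ lam ^ n * c := by
    intro n
    induction n with
    | zero => simp [hcdef]
    | succ n ih =>
      have h1 := hf (x (n + 1)) (x n)
      calc ‖x (n + 1 + 1) - x (n + 1)‖ = ‖f (x (n + 1)) - f (x n)‖ := by
            rw [hx (n + 1), hx n]
        _ ≤ lam * ‖x (n + 1) - x n‖ := h1
        _ ≤ lam * (lam ^ n * c) := by nlinarith
        _ = lam ^ (n + 1) * c := by ring
  have part1 : ∀ n, ‖x (n + 1) - x n‖ ≤ t (n + 1) - t n := by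
    intro n; rw [hdiff n]; exact hxn n
  have part2 : ∀ p ∈ Ω, ∀ n, ‖p.1 - x n‖ ≤ p.2 - t n := by
    intro p hp
    rw [hΩ] at hp
    obtain ⟨h1, h2⟩ := hp
    have h2' : c + ‖f p.1 - p.1‖ ≤ (1 - lam) * p.2 := by
      rw [div_le_iff₀ h1lam] at h2; linarith
    intro n
    induction n with
    | zero => simpa [ht0] using h1
    | succ n ih =>
      have tri : ‖p.1 - x (n + 1)‖ ≤ ‖p.1 - f p.1‖ + ‖f p.1 - f (x n)‖ := by
        rw [hx n]
        exact norm_sub_le_norm_sub_add_norm_sub _ _ _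
      have h3 : ‖f p.1 - f (x n)‖ ≤ lam * ‖p.1 - x n‖ := hf _ _
      have h4 : lam * ‖p.1 - x n‖ ≤ lam * (p.2 - t n) := by nlinarith
      have h5 : ‖p.1 - f p.1‖ = ‖f p.1 - p.1‖ := norm_sub_rev _ _
      rw [ht n]
      linarith
  refine ⟨part1, part2, ?_⟩
  -- contraction structure
  have hlip : LipschitzWith ⟨lam, hlam0.le⟩ f :=
    LipschitzWith.of_dist_le_mul (fun a b => by
      rw [dist_eq_norm, dist_eq_norm]; exact hf a b)
  have hcw : ContractingWith ⟨lam, hlam0.le⟩ f := ⟨by exact_mod_cast hlam1, hlip⟩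
  have hxiter : ∀ n, x n = f^[n] (x 0) := by
    intro n
    induction n with
    | zero => simp
    | succ n ih => rw [hx n, ih, Function.iterate_succ_apply']
  set xs := ContractingWith.fixedPoint f hcw with hxs
  have hxt : Filter.Tendsto x Filter.atTop (nhds xs) := by
    have := hcw.tendsto_iterate_fixedPoint (x 0)
    exact this.congr (fun n => (hxiter n).symm)
  set ts := c / (1 - lam) with hts
  have hpow : Filter.Tendsto (fun n : ℕ => lam ^ n) Filter.atTop (nhds 0) :=
    tendsto_pow_atTop_nhds_zero_of_lt_one hlam0.le hlam1
  have htt : Filter.Tendsto t Filter.atTop (nhds ts) := by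
    have h1 : Filter.Tendsto (fun n : ℕ => ts - lam ^ n * ts) Filter.atTop
        (nhds (ts - 0 * ts)) :=
      Filter.Tendsto.const_sub _ (hpow.mul_const ts)
    simp only [zero_mul, sub_zero] at h1
    exact h1.congr (fun n => (htn n).symm)
  refine ⟨xs, ts, hxt.prodMk_nhds htt, ?_, hcw.fixedPoint_isFixedPt, ?_⟩
  · intro p hp
    have hn : Filter.Tendsto (fun n => ‖p.1 - x n‖) Filter.atTop (nhds ‖p.1 - xs‖) :=
      ((Filter.Tendsto.const_sub p.1 hxt).norm)
    have hd : Filter.Tendsto (fun n => p.2 - t n) Filter.atTop (nhds (p.2 - ts)) :=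
      Filter.Tendsto.const_sub _ htt
    exact le_of_tendsto_of_tendsto' hn hd (part2 p hp)
  · intro y hy
    have h1 : ‖y - xs‖ ≤ lam * ‖y - xs‖ := by
      have := hf y xs
      rw [hy, hcw.fixedPoint_isFixedPt] at this
      exact this
    have h2 : ‖y - xs‖ = 0 := by nlinarith [norm_nonneg (y - xs)]
    have := norm_eq_zero.mp h2
    exact sub_eq_zero.mp this
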